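/- For the uniform transition matrix Q with parameter β on N states, the t-fold product Q^t has the closed form Q^t = β̄_t · I + (1 - β̄_t) · (1/N) · J, where β̄_t = ((Nβ - 1)/(N - 1))^t and J is the all-ones matrix. -/
import Mathlib


/-- Closed form for powers of the uniform transition matrix:
`Q^t = β̄_t • I + (1 - β̄_t) • (1/N) • J` with `β̄_t = ((Nβ-1)/(N-1))^t`. -/
theorem uniform_transition_pow (N : ℕ) (hN : 2 ≤ N) (β : ℝ)
    (hβ : β ∈ Set.Ioo (0 : ℝ) 1)
    (Q : Matrix (Fin N) (Fin N) ℝ)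
    (hQ : ∀ i j, Q i j = if i = j then β else (1 - β) / (N - 1))
    (J : Matrix (Fin N) (Fin N) ℝ) (hJ : ∀ i j, J i j = 1) (t : ℕ) :
    Q ^ t = (((N : ℝ) * β - 1) / ((N : ℝ) - 1)) ^ t • (1 : Matrix (Fin N) (Fin N) ℝ)
      + (1 - (((N : ℝ) * β - 1) / ((N : ℝ) - 1)) ^ t) • ((N : ℝ)⁻¹ • J) := by
  have hNR : (2 : ℝ) ≤ (N : ℝ) := by exact_mod_cast hN
  have hN1 : (N : ℝ) - 1 ≠ 0 := by linarith
  have hN0 : (N : ℝ) ≠ 0 := by linarith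
  set r : ℝ := ((N : ℝ) * β - 1) / ((N : ℝ) - 1) with hr
  have hQeq : Q = r • (1 : Matrix (Fin N) (Fin N) ℝ) + ((1 - β) / ((N : ℝ) - 1)) • J := by
    ext i j
    simp only [hQ, Matrix.add_apply, Matrix.smul_apply, Matrix.one_apply, hJ, smul_eq_mul]
    by_cases h : i = j <;> simp [h, hr] <;> field_simp <;> ring
  have hb : (1 - β) / ((N : ℝ) - 1) = (1 - r) / N := by
    rw [hr]; field_simp; ring
  rw [hb] at hQeq
  clear_value r
  have hJJ : J * J = (N : ℝ) • J := by
    ext i j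
    simp [Matrix.mul_apply, hJ, Finset.sum_const]
  induction t with
  | zero => simp
  | succ t ih =>
    rw [pow_succ, ih, hQeq]
    simp only [add_mul, mul_add, Matrix.smul_mul, Matrix.mul_smul, hJJ, mul_one,
      one_mul, smul_smul]
    match_scalars
    · ring
    · rw [pow_succ]
      field_simp
      ring
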